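/- Let p, q ∈ [0, 1/4] and let n ≥ 16 be a natural number with n(p+q) > 1/2 and n·|p−q| < √(n(p+q)). Suppose X, X' ~ Bin(n,p) and Y, Y' ~ Bin(n,q) are mutually independent. Then Δ := E[|X−Y| + |X'−Y'| − |X−X'| − |Y−Y'|] ≥ n²(p−q)²/(40·√(n(p+q))). -/

import Mathlib

set_option maxHeartbeats 1000000

open MeasureTheory ProbabilityTheory Finset

/-- The binomial distribution `Bin(n, p)`, as a measure on `ℝ` supported on `{0, 1, …, n}`. -/
noncomputable def binomialMeasure (n : ℕ) (p : ℝ) : Measure ℝ :=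
  ∑ k ∈ Finset.range (n + 1),
    ENNReal.ofReal ((n.choose k : ℝ) * p ^ k * (1 - p) ^ (n - k)) • Measure.dirac (k : ℝ)

noncomputable def bco (n k : ℕ) (p : ℝ) : ℝ := (n.choose k : ℝ) * p ^ k * (1 - p) ^ (n - k)

lemma bco_nonneg {n k : ℕ} {p : ℝ} (h0 : 0 ≤ p) (h1 : p ≤ 1) : 0 ≤ bco n k p := by
  unfold bco
  have : (0:ℝ) ≤ 1 - p := by linarith
  positivity

lemma sum_bco (n : ℕ) (p : ℝ) : ∑ k ∈ range (n + 1), bco n k p = 1 := by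
  calc ∑ k ∈ range (n + 1), bco n k p
      = ∑ k ∈ range (n + 1), p^k * (1-p)^(n-k) * (n.choose k : ℝ) :=
        Finset.sum_congr rfl fun k _ => by unfold bco; ring
    _ = (p + (1-p))^n := (add_pow p (1-p) n).symm
    _ = 1 := by norm_num

lemma sum_mul_bco (n : ℕ) (p : ℝ) :
    ∑ k ∈ range (n + 1), (k : ℝ) * bco n k p = n * p := by
  cases n with
  | zero => simp [bco]
  | succ m =>
    rw [Finset.sum_range_succ']
    simp only [Nat.cast_zero, zero_mul, add_zero]
    have h1 : ∀ i ∈ range (m + 1), ((i + 1 : ℕ) : ℝ) * bco (m + 1) (i + 1) p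
        = ((m:ℝ) + 1) * p * bco m i p := by
      intro i hi
      have hc : ((m + 1).choose (i + 1) : ℝ) * ((i : ℝ) + 1) = ((m : ℝ) + 1) * (m.choose i : ℝ) := by
        exact_mod_cast congrArg (Nat.cast (R := ℝ)) (Nat.add_one_mul_choose_eq m i).symm
      unfold bco
      have hsub : m + 1 - (i + 1) = m - i := by omega
      rw [hsub, pow_succ]
      push_cast
      linear_combination (p^i * p * (1-p)^(m-i)) * hc
    rw [Finset.sum_congr rfl h1, ← Finset.mul_sum, sum_bco, mul_one]
    push_cast; ring

lemma sum_mul2_bco (n : ℕ) (p : ℝ) :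
    ∑ k ∈ range (n + 1), (k : ℝ) * ((k:ℝ) - 1) * bco n k p = n * ((n:ℝ) - 1) * p^2 := by
  cases n with
  | zero => simp [bco]
  | succ m =>
    rw [Finset.sum_range_succ']
    simp only [Nat.cast_zero, zero_mul, add_zero]
    have h1 : ∀ i ∈ range (m + 1), ((i + 1 : ℕ) : ℝ) * (((i + 1 : ℕ):ℝ) - 1) * bco (m + 1) (i + 1) p
        = ((m:ℝ) + 1) * p * ((i:ℝ) * bco m i p) := by
      intro i hi
      have hc : ((m + 1).choose (i + 1) : ℝ) * ((i : ℝ) + 1) = ((m : ℝ) + 1) * (m.choose i : ℝ) := by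
        exact_mod_cast congrArg (Nat.cast (R := ℝ)) (Nat.add_one_mul_choose_eq m i).symm
      unfold bco
      have hsub : m + 1 - (i + 1) = m - i := by omega
      rw [hsub, pow_succ]
      push_cast
      linear_combination ((i:ℝ) * p^i * p * (1-p)^(m-i)) * hc
    rw [Finset.sum_congr rfl h1, ← Finset.mul_sum, sum_mul_bco]
    push_cast; ring

lemma sum_sq_dev_bco (n : ℕ) (p m : ℝ) :
    ∑ k ∈ range (n + 1), ((k : ℝ) - m)^2 * bco n k p
      = n * p * (1 - p) + ((n:ℝ) * p - m)^2 := by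
  have expand : ∀ k : ℕ, ((k : ℝ) - m)^2 * bco n k p
      = (k:ℝ) * ((k:ℝ) - 1) * bco n k p + (1 - 2*m) * ((k:ℝ) * bco n k p) + m^2 * bco n k p := by
    intro k; ring
  rw [Finset.sum_congr rfl fun k _ => expand k, Finset.sum_add_distrib, Finset.sum_add_distrib,
    ← Finset.mul_sum, ← Finset.mul_sum, sum_mul2_bco, sum_mul_bco, sum_bco]
  ring

lemma hasDerivAt_bco (n j : ℕ) (r : ℝ) :
    HasDerivAt (fun x => bco n j x)
      ((j:ℝ) * (n.choose j : ℝ) * r^(j-1) * (1-r)^(n-j)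
        - ((n-j : ℕ):ℝ) * (n.choose j : ℝ) * r^j * (1-r)^(n-j-1)) r := by
  have h2 : HasDerivAt (fun x : ℝ => (1-x)^(n-j)) (((n-j:ℕ):ℝ) * (1-r)^(n-j-1) * (-1)) r :=
    (((hasDerivAt_id r).const_sub 1).pow (n-j))
  have h1 : HasDerivAt (fun x : ℝ => (n.choose j : ℝ) * x ^ j)
      ((n.choose j : ℝ) * ((j:ℝ) * r^(j-1))) r := (hasDerivAt_pow j r).const_mul _
  have H : HasDerivAt (fun x => bco n j x) _ r := h1.mul h2
  convert H using 1
  ring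

lemma hasDerivAt_bco_succ (n l : ℕ) (hl : l + 1 ≤ n) (r : ℝ) :
    HasDerivAt (fun x => bco n (l+1) x)
      ((n:ℝ) * bco (n-1) l r - (n:ℝ) * bco (n-1) (l+1) r) r := by
  obtain ⟨m, rfl⟩ : ∃ m, n = m + 1 := ⟨n - 1, by omega⟩
  have hA : ((l:ℝ) + 1) * ((m+1).choose (l+1) : ℝ) = ((m:ℝ)+1) * (m.choose l : ℝ) := by
    exact_mod_cast congrArg (Nat.cast (R := ℝ))
      (mul_comm (l+1) ((m+1).choose (l+1)) ▸ (Nat.add_one_mul_choose_eq m l).symm)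
  have hB : ((m + 1 - (l+1) : ℕ):ℝ) * ((m+1).choose (l+1) : ℝ) = ((m:ℝ)+1) * (m.choose (l+1) : ℝ) := by
    have := Nat.choose_mul_succ_eq m (l+1)
    have hnat : (m + 1 - (l+1)) * ((m+1).choose (l+1)) = (m+1) * (m.choose (l+1)) := by
      rw [mul_comm ((m+1-(l+1))) _, ← Nat.choose_mul_succ_eq m (l+1)]; ring
    exact_mod_cast congrArg (Nat.cast (R := ℝ)) hnat
  convert hasDerivAt_bco (m+1) (l+1) r using 1
  unfold bco
  have e1 : m + 1 - 1 = m := by omega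
  have e2 : (m+1) - (l+1) = m - l := by omega
  have e3 : m - (l + 1) = m + 1 - (l+1) - 1 := by omega
  have e4 : l + 1 - 1 = l := by omega
  rw [e1, e2, e4]
  push_cast [e2] at hA hB ⊢
  rw [show m - (l+1) = (m - l) - 1 by omega] at *
  linear_combination (-(r^l * (1-r)^(m-l))) * hA + (r^(l+1) * (1-r)^(m-l-1)) * hB

lemma hasDerivAt_F (n : ℕ) (i : ℕ) (hi : i < n) (r : ℝ) :
    HasDerivAt (fun x => ∑ j ∈ range (i+1), bco n j x) (-((n:ℝ) * bco (n-1) i r)) r := by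
  induction i with
  | zero =>
    simp only [zero_add, Finset.sum_range_one]
    have H := hasDerivAt_bco n 0 r
    convert H using 1
    unfold bco
    simp only [Nat.choose_zero_right, Nat.cast_one, pow_zero, Nat.sub_zero, Nat.cast_zero]
    norm_num
  | succ l ih =>
    have IH := ih (by omega)
    have ht := hasDerivAt_bco_succ n l (by omega) r
    have H : HasDerivAt (fun x => (∑ j ∈ range (l+1), bco n j x) + bco n (l+1) x) _ r := IH.add ht
    have hfun : (fun x => ∑ j ∈ range (l+2), bco n j x)
        = (fun x => (∑ j ∈ range (l+1), bco n j x) + bco n (l+1) x) := by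
      funext x; rw [Finset.sum_range_succ]
    rw [hfun]
    convert H using 1
    ring

lemma continuous_nbco (n i : ℕ) : Continuous (fun r : ℝ => (n:ℝ) * bco (n-1) i r) := by
  unfold bco
  exact continuous_const.mul (((continuous_const.mul (continuous_pow i)).mul
    ((continuous_const.sub continuous_id).pow _)))

lemma cdf_diff_eq (n i : ℕ) (hi : i < n) (p q : ℝ) :
    ∫ r in q..p, (n:ℝ) * bco (n-1) i r
      = (∑ j ∈ range (i+1), bco n j q) - (∑ j ∈ range (i+1), bco n j p) := by
  have hftc := intervalIntegral.integral_eq_sub_of_hasDerivAt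
    (f := fun x => ∑ j ∈ range (i+1), bco n j x)
    (f' := fun r => -((n:ℝ) * bco (n-1) i r))
    (a := q) (b := p)
    (fun x _ => hasDerivAt_F n i hi x)
    (((continuous_nbco n i).neg).intervalIntegrable q p)
  rw [intervalIntegral.integral_neg] at hftc
  linarith [hftc]

lemma key_ineq (n : ℕ) (p q : ℝ) (hp : p ∈ Set.Icc (0:ℝ) (1/4)) (hq : q ∈ Set.Icc (0:ℝ) (1/4))
    (hpq : q ≤ p) (hn : 1 ≤ n)
    (hsum : 1/2 < (n:ℝ) * (p + q)) (hdiff : (n:ℝ) * |p - q| < Real.sqrt ((n:ℝ) * (p + q))) :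
    (n:ℝ)^2 * (p - q)^2 / (40 * Real.sqrt ((n:ℝ) * (p+q)))
      ≤ 2 * ∑ i ∈ range n, ((∑ j ∈ range (i+1), bco n j p) - (∑ j ∈ range (i+1), bco n j q))^2 := by
  obtain ⟨hq0, hq1⟩ := hq
  obtain ⟨hp0, hp1⟩ := hp
  set s : ℝ := Real.sqrt ((n:ℝ) * (p + q)) with hs_def
  have hs2 : s^2 = (n:ℝ) * (p + q) := Real.sq_sqrt (by linarith)
  have hs_pos : 0 < s := Real.sqrt_pos.2 (by linarith)
  have hs7 : 7/10 ≤ s := by nlinarith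
  have hds : (n:ℝ) * (p - q) < s := by
    rwa [abs_of_nonneg (by linarith)] at hdiff
  have ht0 : 0 ≤ (n:ℝ) * (p - q) := mul_nonneg (Nat.cast_nonneg n) (by linarith)
  set t : ℝ := (n:ℝ) * (p - q) with ht_def
  set m : ℝ := (n:ℝ) * (p + q) / 2 with hm_def
  -- the density-difference functions
  set g : ℕ → ℝ := fun i => ∫ r in q..p, (n:ℝ) * bco (n-1) i r with hg_def
  have hrange : range n = range ((n-1)+1) := by congr 1; omega
  have hn1 : (1:ℝ) ≤ (n:ℝ) := by exact_mod_cast hn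
  have hnonneg_int : ∀ (i : ℕ) (r : ℝ), r ∈ Set.Icc q p → 0 ≤ (n:ℝ) * bco (n-1) i r := by
    intro i r hr
    exact mul_nonneg (Nat.cast_nonneg n) (bco_nonneg (by linarith [hr.1]) (by linarith [hr.2]))
  have hg_nonneg : ∀ i, 0 ≤ g i := fun i =>
    intervalIntegral.integral_nonneg hpq (hnonneg_int i)
  have hg_eq : ∀ i ∈ range n, g i
      = (∑ j ∈ range (i+1), bco n j q) - (∑ j ∈ range (i+1), bco n j p) :=
    fun i hi => cdf_diff_eq n i (mem_range.1 hi) p q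
  -- total sum of g
  have hg_sum : ∑ i ∈ range n, g i = t := by
    rw [hg_def, ← intervalIntegral.integral_finset_sum
      (fun i _ => (continuous_nbco n i).intervalIntegrable q p)]
    have hpt : ∀ r : ℝ, ∑ i ∈ range n, (n:ℝ) * bco (n-1) i r = (n:ℝ) := by
      intro r
      rw [← Finset.mul_sum, hrange, sum_bco, mul_one]
    simp only [hpt]
    rw [intervalIntegral.integral_const, smul_eq_mul, ht_def]
    ring
  -- second-moment bound, pointwise in r
  have hmom : ∀ r ∈ Set.Icc q p,
      ∑ i ∈ range n, ((i:ℝ) - m)^2 * ((n:ℝ) * bco (n-1) i r) ≤ (n:ℝ) * (2 * s^2) := by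
    intro r hr
    obtain ⟨hr1, hr2⟩ := hr
    have hsum_eq : ∑ i ∈ range n, ((i:ℝ) - m)^2 * ((n:ℝ) * bco (n-1) i r)
        = (n:ℝ) * (∑ i ∈ range n, ((i:ℝ) - m)^2 * bco (n-1) i r) := by
      rw [Finset.mul_sum]; exact Finset.sum_congr rfl fun i _ => by ring
    rw [hsum_eq, hrange, sum_sq_dev_bco]
    have hcast : ((n-1 : ℕ):ℝ) = (n:ℝ) - 1 := by
      rw [Nat.cast_sub hn]; norm_num
    rw [hcast]
    have hr0 : 0 ≤ r := by linarith
    have hrle : r ≤ 1/4 := by linarith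
    have hA : (n:ℝ) * r ≤ (n:ℝ) * p := mul_le_mul_of_nonneg_left hr2 (Nat.cast_nonneg n)
    have hB : (0:ℝ) ≤ ((n:ℝ) - 1) * (r * r) := mul_nonneg (by linarith) (mul_nonneg hr0 hr0)
    have hC : (0:ℝ) ≤ (n:ℝ) * q := mul_nonneg (Nat.cast_nonneg n) hq0
    have hB' : (n:ℝ) * q ≤ (n:ℝ) * r := mul_le_mul_of_nonneg_left hr1 (Nat.cast_nonneg n)
    have hb1 : ((n:ℝ) - 1) * r * (1 - r) ≤ s^2 := by nlinarith
    have hoff1 : ((n:ℝ) - 1) * r - m ≤ s := by linarith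
    have hoff2 : -s ≤ ((n:ℝ) - 1) * r - m := by linarith
    have hb2 : (((n:ℝ) - 1) * r - m)^2 ≤ s^2 := sq_le_sq' hoff2 hoff1
    nlinarith [add_le_add hb1 hb2, (Nat.cast_nonneg n : (0:ℝ) ≤ n)]
  -- the big integrals G i
  set G : ℕ → ℝ := fun i => ∫ r in q..p, ((i:ℝ) - m)^2 * ((n:ℝ) * bco (n-1) i r) with hG_def
  have hGcont : ∀ i : ℕ, Continuous (fun r : ℝ => ((i:ℝ) - m)^2 * ((n:ℝ) * bco (n-1) i r)) :=
    fun i => continuous_const.mul (continuous_nbco n i)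
  have hG_nonneg : ∀ i, 0 ≤ G i := fun i =>
    intervalIntegral.integral_nonneg hpq
      (fun r hr => mul_nonneg (sq_nonneg _) (hnonneg_int i r hr))
  have hG_sum : ∑ i ∈ range n, G i ≤ (p - q) * ((n:ℝ) * (2 * s^2)) := by
    rw [hG_def, ← intervalIntegral.integral_finset_sum
      (fun i _ => (hGcont i).intervalIntegrable q p)]
    calc ∫ r in q..p, ∑ i ∈ range n, ((i:ℝ) - m)^2 * ((n:ℝ) * bco (n-1) i r)
        ≤ ∫ r in q..p, (n:ℝ) * (2 * s^2) := by
          apply intervalIntegral.integral_mono_on hpq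
            ((continuous_finset_sum _ fun i _ => hGcont i).intervalIntegrable q p)
            (intervalIntegrable_const) hmom
      _ = (p - q) * ((n:ℝ) * (2 * s^2)) := by
          rw [intervalIntegral.integral_const, smul_eq_mul]
  -- split into window and tail
  set W : Finset ℕ := (range n).filter (fun i => ((i:ℝ) - m)^2 ≤ (6*s)^2) with hW_def
  set Wc : Finset ℕ := (range n).filter (fun i => ¬ ((i:ℝ) - m)^2 ≤ (6*s)^2) with hWc_def
  have htail_each : ∀ i ∈ Wc, (6*s)^2 * g i ≤ G i := by
    intro i hi
    obtain ⟨hi1, hi2⟩ := Finset.mem_filter.1 hi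
    push_neg at hi2
    have heq : (6*s)^2 * g i = ∫ r in q..p, (6*s)^2 * ((n:ℝ) * bco (n-1) i r) := by
      rw [hg_def]; exact (intervalIntegral.integral_const_mul _ _).symm
    rw [heq, hG_def]
    apply intervalIntegral.integral_mono_on hpq
      ((continuous_const.mul (continuous_nbco n i)).intervalIntegrable q p)
      ((hGcont i).intervalIntegrable q p)
    intro r hr
    exact mul_le_mul_of_nonneg_right (le_of_lt hi2) (hnonneg_int i r hr)
  have htail1 : (6*s)^2 * ∑ i ∈ Wc, g i ≤ ∑ i ∈ Wc, G i := by
    rw [Finset.mul_sum]; exact Finset.sum_le_sum htail_each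
  have htail2 : ∑ i ∈ Wc, G i ≤ ∑ i ∈ range n, G i :=
    Finset.sum_le_sum_of_subset_of_nonneg (Finset.filter_subset _ _) (fun i _ _ => hG_nonneg i)
  have htail3 : ∑ i ∈ Wc, g i ≤ t / 18 := by
    have h36 : (6*s)^2 * ∑ i ∈ Wc, g i ≤ 2 * t * s^2 := by
      calc (6*s)^2 * ∑ i ∈ Wc, g i ≤ ∑ i ∈ range n, G i := le_trans htail1 htail2
        _ ≤ (p - q) * ((n:ℝ) * (2 * s^2)) := hG_sum
        _ = 2 * t * s^2 := by rw [ht_def]; ring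
    refine (mul_le_mul_iff_of_pos_right (show (0:ℝ) < 36*s^2 by positivity)).mp ?_
    calc (∑ i ∈ Wc, g i) * (36*s^2) = (6*s)^2 * ∑ i ∈ Wc, g i := by ring
      _ ≤ 2*t*s^2 := h36
      _ = (t/18)*(36*s^2) := by ring
  have hWsum : (17/18) * t ≤ ∑ i ∈ W, g i := by
    have hsplit : ∑ i ∈ W, g i + ∑ i ∈ Wc, g i = ∑ i ∈ range n, g i :=
      Finset.sum_filter_add_sum_filter_not _ _ _
    linarith [hg_sum, htail3]
  -- cardinality of window
  have hcard : (W.card : ℝ) ≤ 15 * s := by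
    have hmem : ∀ i ∈ W, (m - 6*s) ≤ (i:ℝ) ∧ (i:ℝ) ≤ m + 6*s := by
      intro i hi
      obtain ⟨_, hi2⟩ := Finset.mem_filter.1 hi
      constructor <;> nlinarith [hi2, hs_pos]
    have hsubset : W ⊆ Finset.Icc 0 (Nat.floor (m + 6*s)) := by
      intro i hi
      refine Finset.mem_Icc.2 ⟨Nat.zero_le i, Nat.le_floor ?_⟩
      exact (hmem i hi).2
    rcases le_or_gt (m - 6*s) 0 with hcase | hcase
    · -- m ≤ 6s : window contained in [0, m+6s] with m+6s ≤ 12s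
      have h1 : (W.card : ℝ) ≤ ((Finset.Icc 0 (Nat.floor (m + 6*s))).card : ℝ) := by
        exact_mod_cast Finset.card_le_card hsubset
      have h2 : (Finset.Icc 0 (Nat.floor (m + 6*s))).card = Nat.floor (m + 6*s) + 1 := by
        rw [Nat.card_Icc]; omega
      have h3 : ((Nat.floor (m + 6*s) : ℕ) : ℝ) ≤ m + 6*s :=
        Nat.floor_le (by nlinarith)
      rw [h2] at h1
      push_cast at h1
      nlinarith [hs7]
    · -- m > 6s : window in [ceil (m - 6s), floor (m + 6s)]
      have hsubset2 : W ⊆ Finset.Icc (Nat.ceil (m - 6*s)) (Nat.floor (m + 6*s)) := by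
        intro i hi
        refine Finset.mem_Icc.2 ⟨Nat.ceil_le.2 (hmem i hi).1, Nat.le_floor (hmem i hi).2⟩
      have h1 : (W.card : ℝ) ≤ ((Finset.Icc (Nat.ceil (m - 6*s)) (Nat.floor (m + 6*s))).card : ℝ) := by
        exact_mod_cast Finset.card_le_card hsubset2
      have h2 : ((Finset.Icc (Nat.ceil (m - 6*s)) (Nat.floor (m + 6*s))).card : ℝ)
          ≤ 12 * s + 1 := by
        rcases le_or_gt (Nat.ceil (m - 6*s)) (Nat.floor (m + 6*s)) with hab | hab
        · rw [Nat.card_Icc, Nat.cast_sub (by omega)]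
          have h3 : ((Nat.floor (m + 6*s) : ℕ) : ℝ) ≤ m + 6*s := Nat.floor_le (by nlinarith)
          have h4 : m - 6*s ≤ ((Nat.ceil (m - 6*s) : ℕ) : ℝ) := Nat.le_ceil _
          push_cast
          linarith
        · rw [Nat.card_Icc, Nat.sub_eq_zero_of_le (by omega)]
          norm_num
          nlinarith [hs_pos]
      nlinarith [hs7, h1, h2]
  -- Cauchy-Schwarz
  have hcs : (∑ i ∈ W, g i)^2 ≤ (W.card : ℝ) * ∑ i ∈ W, (g i)^2 :=
    sq_sum_le_card_mul_sum_sq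
  have hsub2 : ∑ i ∈ W, (g i)^2 ≤ ∑ i ∈ range n, (g i)^2 :=
    Finset.sum_le_sum_of_subset_of_nonneg (Finset.filter_subset _ _) (fun i _ _ => sq_nonneg _)
  have hSnonneg : 0 ≤ ∑ i ∈ range n, (g i)^2 := Finset.sum_nonneg fun i _ => sq_nonneg _
  have hmain : ((17/18) * t)^2 ≤ 15 * s * ∑ i ∈ range n, (g i)^2 := by
    calc ((17/18) * t)^2 ≤ (∑ i ∈ W, g i)^2 := by
          apply pow_le_pow_left₀ (by positivity) hWsum
      _ ≤ (W.card : ℝ) * ∑ i ∈ W, (g i)^2 := hcs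
      _ ≤ 15 * s * ∑ i ∈ range n, (g i)^2 := by
          apply mul_le_mul hcard hsub2 (Finset.sum_nonneg fun i _ => sq_nonneg _) (by positivity)
  -- conclude
  have hgoal_sum : ∑ i ∈ range n, ((∑ j ∈ range (i+1), bco n j p) - (∑ j ∈ range (i+1), bco n j q))^2
      = ∑ i ∈ range n, (g i)^2 := by
    apply Finset.sum_congr rfl
    intro i hi
    rw [hg_eq i hi]; ring
  rw [hgoal_sum, div_le_iff₀ (by positivity)]
  have ht2 : t^2 = (n:ℝ)^2*(p-q)^2 := by rw [ht_def]; ring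
  nlinarith [hmain, mul_nonneg hs_pos.le hSnonneg, ht2]

noncomputable def indf (i : ℕ) (x : ℝ) : ℝ := if x ≤ (i:ℝ) then 1 else 0

lemma measurable_indf (i : ℕ) : Measurable (indf i) := by
  unfold indf
  exact Measurable.ite measurableSet_Iic measurable_const measurable_const

lemma indf_bound (i : ℕ) (x : ℝ) : ‖indf i x‖ ≤ 1 := by
  unfold indf; split <;> simp

lemma indf_sq (i : ℕ) (x : ℝ) : indf i x * indf i x = indf i x := by
  unfold indf; split <;> norm_num

lemma indf_diff_sq_le (i : ℕ) (x y : ℝ) : ‖(indf i x - indf i y)^2‖ ≤ 1 := by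
  unfold indf; split <;> split <;> norm_num

lemma integral_binomialMeasure {n : ℕ} {p : ℝ} (h0 : 0 ≤ p) (h1 : p ≤ 1) (f : ℝ → ℝ) :
    ∫ x, f x ∂(binomialMeasure n p) = ∑ k ∈ range (n+1), bco n k p * f k := by
  unfold binomialMeasure
  rw [MeasureTheory.integral_finset_sum_measure ?_]
  · refine Finset.sum_congr rfl fun k _ => ?_
    have hk : (0:ℝ) ≤ (n.choose k : ℝ) * p ^ k * (1 - p) ^ (n - k) := by
      have h := bco_nonneg (n := n) (k := k) h0 h1; unfold bco at h; exact h
    rw [integral_smul_measure, integral_dirac, ENNReal.toReal_ofReal hk, smul_eq_mul]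
    unfold bco
    ring
  · intro k _
    exact (((integrable_congr (ae_eq_dirac f)).2 (integrable_const _)).smul_measure
      ENNReal.ofReal_ne_top)

lemma expec_comp {Ω : Type*} [MeasurableSpace Ω] (μ : Measure Ω) {X : Ω → ℝ}
    (hXm : Measurable X) {n : ℕ} {p : ℝ} (hX : Measure.map X μ = binomialMeasure n p)
    (h0 : 0 ≤ p) (h1 : p ≤ 1) (f : ℝ → ℝ) (hf : Measurable f) :
    ∫ ω, f (X ω) ∂μ = ∑ k ∈ range (n+1), bco n k p * f k := by
  rw [← integral_map hXm.aemeasurable hf.aestronglyMeasurable, hX,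
    integral_binomialMeasure h0 h1]

lemma cdf_partial (n : ℕ) (p : ℝ) (i : ℕ) (hi : i < n) :
    ∑ k ∈ range (n+1), bco n k p * indf i (k:ℝ) = ∑ j ∈ range (i+1), bco n j p := by
  rw [← Finset.sum_subset (Finset.range_subset_range.2 (by omega) : range (i+1) ⊆ range (n+1)) ?_]
  · refine Finset.sum_congr rfl fun k hk => ?_
    have hki : (k:ℝ) ≤ (i:ℝ) := Nat.cast_le.2 (by have := Finset.mem_range.1 hk; omega)
    unfold indf; rw [if_pos hki, mul_one]
  · intro k _ hk2
    have hki : ¬ ((k:ℝ) ≤ (i:ℝ)) := by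
      rw [Nat.cast_le]; intro h; exact hk2 (Finset.mem_range.2 (by omega))
    unfold indf; rw [if_neg hki, mul_zero]

lemma ae_cast_mem {Ω : Type*} [MeasurableSpace Ω] (μ : Measure Ω) {X : Ω → ℝ}
    (hXm : Measurable X) {n : ℕ} {p : ℝ} (hX : Measure.map X μ = binomialMeasure n p) :
    ∀ᵐ ω ∂μ, ∃ j : ℕ, j ≤ n ∧ X ω = (j:ℝ) := by
  set S : Set ℝ := ⋃ (j : ℕ) (_ : j ∈ Finset.range (n+1)), {(j:ℝ)} with hS
  have hSm : MeasurableSet S :=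
    MeasurableSet.biUnion (Set.to_countable _) fun _ _ => measurableSet_singleton _
  have hc : μ (X ⁻¹' Sᶜ) = 0 := by
    rw [← Measure.map_apply hXm hSm.compl, hX]
    unfold binomialMeasure
    rw [Measure.finset_sum_apply]
    refine Finset.sum_eq_zero fun k hk => ?_
    rw [Measure.smul_apply, Measure.dirac_apply' _ hSm.compl]
    have hmem : (k:ℝ) ∈ S := by
      rw [hS]; exact Set.mem_biUnion hk rfl
    rw [Set.indicator_of_notMem (by simpa using hmem)]
    simp
  rw [ae_iff]
  have hset : {ω | ¬ ∃ j : ℕ, j ≤ n ∧ X ω = (j:ℝ)} = X ⁻¹' Sᶜ := by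
    ext ω
    simp [hS, Nat.lt_succ_iff, eq_comm]
  rw [hset]; exact hc

lemma abs_sub_eq_sum_indf (n j k : ℕ) (hj : j ≤ n) (hk : k ≤ n) :
    |(j:ℝ) - (k:ℝ)| = ∑ i ∈ range n, (indf i (j:ℝ) - indf i (k:ℝ))^2 := by
  wlog hjk : j ≤ k generalizing j k
  · rw [abs_sub_comm, this k j hk hj (le_of_not_ge hjk)]
    exact Finset.sum_congr rfl fun i _ => by ring
  have hind : ∀ i : ℕ, (indf i (j:ℝ) - indf i (k:ℝ))^2 = if j ≤ i ∧ i < k then (1:ℝ) else 0 := by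
    intro i
    unfold indf
    simp only [Nat.cast_le]
    by_cases h1 : j ≤ i <;> by_cases h2 : k ≤ i
    · rw [if_pos h1, if_pos h2, if_neg (by omega)]; norm_num
    · rw [if_pos h1, if_neg h2, if_pos ⟨h1, by omega⟩]; norm_num
    · exact absurd (le_trans hjk h2) h1
    · rw [if_neg h1, if_neg h2, if_neg (by omega)]; norm_num
  rw [Finset.sum_congr rfl fun i _ => hind i, Finset.sum_boole]
  have hfilter : (range n).filter (fun i => j ≤ i ∧ i < k) = Finset.Ico j k := by
    ext i
    simp only [Finset.mem_filter, Finset.mem_range, Finset.mem_Ico]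
    omega
  rw [hfilter, Nat.card_Ico, Nat.cast_sub hjk,
    abs_of_nonpos (sub_nonpos.2 (Nat.cast_le.2 hjk)), neg_sub]

lemma pair_expect {Ω : Type*} [MeasurableSpace Ω] (μ : Measure Ω) [IsProbabilityMeasure μ]
    {U V : Ω → ℝ} (hU : Measurable U) (hV : Measurable V) (hUV : IndepFun U V μ)
    (i : ℕ) (FU FV : ℝ)
    (hFU : ∫ ω, indf i (U ω) ∂μ = FU) (hFV : ∫ ω, indf i (V ω) ∂μ = FV) :
    ∫ ω, (indf i (U ω) - indf i (V ω))^2 ∂μ = FU + FV - 2*(FU*FV) := by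
  have hmU : Measurable fun ω => indf i (U ω) := (measurable_indf i).comp hU
  have hmV : Measurable fun ω => indf i (V ω) := (measurable_indf i).comp hV
  have hiU : Integrable (fun ω => indf i (U ω)) μ :=
    (integrable_const (1:ℝ)).mono' hmU.aestronglyMeasurable
      (Filter.Eventually.of_forall fun ω => indf_bound i (U ω))
  have hiV : Integrable (fun ω => indf i (V ω)) μ :=
    (integrable_const (1:ℝ)).mono' hmV.aestronglyMeasurable
      (Filter.Eventually.of_forall fun ω => indf_bound i (V ω))
  have hiUV : Integrable (fun ω => indf i (U ω) * indf i (V ω)) μ := by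
    refine (integrable_const (1:ℝ)).mono' (hmU.mul hmV).aestronglyMeasurable
      (Filter.Eventually.of_forall fun ω => ?_)
    rw [norm_mul]
    calc ‖indf i (U ω)‖ * ‖indf i (V ω)‖ ≤ 1 * 1 :=
      mul_le_mul (indf_bound _ _) (indf_bound _ _) (norm_nonneg _) zero_le_one
    _ = 1 := by norm_num
  have hprod : ∫ ω, indf i (U ω) * indf i (V ω) ∂μ = FU * FV := by
    have hIndep2 : IndepFun (fun ω => indf i (U ω)) (fun ω => indf i (V ω)) μ :=
      hUV.comp (measurable_indf i) (measurable_indf i)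
    rw [← hFU, ← hFV]
    exact hIndep2.integral_mul_eq_mul_integral hiU.aestronglyMeasurable hiV.aestronglyMeasurable
  have hexpand : ∀ ω, (indf i (U ω) - indf i (V ω))^2
      = indf i (U ω) + indf i (V ω) - 2*(indf i (U ω) * indf i (V ω)) := by
    intro ω
    linear_combination indf_sq i (U ω) + indf_sq i (V ω)
  calc ∫ ω, (indf i (U ω) - indf i (V ω))^2 ∂μ
      = ∫ ω, (indf i (U ω) + indf i (V ω) - 2*(indf i (U ω) * indf i (V ω))) ∂μ :=
        integral_congr_ae (Filter.Eventually.of_forall fun ω => hexpand ω)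
    _ = (∫ ω, indf i (U ω) ∂μ) + (∫ ω, indf i (V ω) ∂μ)
        - 2 * ∫ ω, indf i (U ω) * indf i (V ω) ∂μ := by
        rw [integral_sub (by exact hiU.add hiV) (by exact hiUV.const_mul 2),
          integral_add hiU hiV, MeasureTheory.integral_const_mul]
    _ = FU + FV - 2*(FU*FV) := by rw [hFU, hFV, hprod]

theorem binomial_expectation_gap_case {Ω : Type*} [MeasurableSpace Ω] (μ : Measure Ω)
    [IsProbabilityMeasure μ]
    (p q : ℝ) (hp : p ∈ Set.Icc (0 : ℝ) (1/4)) (hq : q ∈ Set.Icc (0 : ℝ) (1/4))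
    (n : ℕ) (hn : 16 ≤ n)
    (hsum : 1/2 < (n : ℝ) * (p + q)) (hdiff : (n : ℝ) * |p - q| < Real.sqrt (n * (p + q)))
    (X X' Y Y' : Ω → ℝ)
    (hXm : Measurable X) (hX'm : Measurable X') (hYm : Measurable Y) (hY'm : Measurable Y')
    (hindep : iIndepFun ![X, X', Y, Y'] μ)
    (hX : Measure.map X μ = binomialMeasure n p)
    (hX' : Measure.map X' μ = binomialMeasure n p)
    (hY : Measure.map Y μ = binomialMeasure n q)
    (hY' : Measure.map Y' μ = binomialMeasure n q) :
    ∫ ω, (|X ω - Y ω| + |X' ω - Y' ω| - |X ω - X' ω| - |Y ω - Y' ω|) ∂μ ≥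
      n ^ 2 * (p - q) ^ 2 / (40 * Real.sqrt (n * (p + q))) := by
  obtain ⟨hp0, hp1⟩ := hp
  obtain ⟨hq0, hq1⟩ := hq
  have hp1' : p ≤ 1 := by linarith
  have hq1' : q ≤ 1 := by linarith
  -- CDF values
  set Fp : ℕ → ℝ := fun i => ∑ k ∈ range (n+1), bco n k p * indf i (k:ℝ) with hFp_def
  set Fq : ℕ → ℝ := fun i => ∑ k ∈ range (n+1), bco n k q * indf i (k:ℝ) with hFq_def
  have hEX : ∀ i : ℕ, ∫ ω, indf i (X ω) ∂μ = Fp i :=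
    fun i => expec_comp μ hXm hX hp0 hp1' (indf i) (measurable_indf i)
  have hEX' : ∀ i : ℕ, ∫ ω, indf i (X' ω) ∂μ = Fp i :=
    fun i => expec_comp μ hX'm hX' hp0 hp1' (indf i) (measurable_indf i)
  have hEY : ∀ i : ℕ, ∫ ω, indf i (Y ω) ∂μ = Fq i :=
    fun i => expec_comp μ hYm hY hq0 hq1' (indf i) (measurable_indf i)
  have hEY' : ∀ i : ℕ, ∫ ω, indf i (Y' ω) ∂μ = Fq i :=
    fun i => expec_comp μ hY'm hY' hq0 hq1' (indf i) (measurable_indf i)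
  -- independence of pairs
  have h01 : IndepFun X X' μ := by
    simpa using hindep.indepFun (show (0:Fin 4) ≠ 1 by decide)
  have h23 : IndepFun Y Y' μ := by
    simpa using hindep.indepFun (show (2:Fin 4) ≠ 3 by decide)
  have h02 : IndepFun X Y μ := by
    simpa using hindep.indepFun (show (0:Fin 4) ≠ 2 by decide)
  have h13 : IndepFun X' Y' μ := by
    simpa using hindep.indepFun (show (1:Fin 4) ≠ 3 by decide)
  -- the summand functions
  set D : ℕ → Ω → ℝ := fun i ω =>
    (indf i (X ω) - indf i (Y ω))^2 + (indf i (X' ω) - indf i (Y' ω))^2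
      - (indf i (X ω) - indf i (X' ω))^2 - (indf i (Y ω) - indf i (Y' ω))^2 with hD_def
  have hsq_int : ∀ (i : ℕ) (U V : Ω → ℝ), Measurable U → Measurable V →
      Integrable (fun ω => (indf i (U ω) - indf i (V ω))^2) μ := by
    intro i U V hU hV
    refine (integrable_const (1:ℝ)).mono'
      ((((measurable_indf i).comp hU).sub ((measurable_indf i).comp hV)).pow_const 2).aestronglyMeasurable
      (Filter.Eventually.of_forall fun ω => indf_diff_sq_le i (U ω) (V ω))
  have hD_int : ∀ i ∈ range n, Integrable (D i) μ := by
    intro i _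
    exact (((hsq_int i X Y hXm hYm).add (hsq_int i X' Y' hX'm hY'm)).sub
      (hsq_int i X X' hXm hX'm)).sub (hsq_int i Y Y' hYm hY'm)
  have hD_val : ∀ i ∈ range n, ∫ ω, D i ω ∂μ = 2 * (Fp i - Fq i)^2 := by
    intro i _
    have e1 := pair_expect μ hXm hYm h02 i (Fp i) (Fq i) (hEX i) (hEY i)
    have e2 := pair_expect μ hX'm hY'm h13 i (Fp i) (Fq i) (hEX' i) (hEY' i)
    have e3 := pair_expect μ hXm hX'm h01 i (Fp i) (Fp i) (hEX i) (hEX' i)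
    have e4 := pair_expect μ hYm hY'm h23 i (Fq i) (Fq i) (hEY i) (hEY' i)
    simp only [hD_def]
    rw [integral_sub (by exact (((hsq_int i X Y hXm hYm).add (hsq_int i X' Y' hX'm hY'm)).sub
          (hsq_int i X X' hXm hX'm))) (hsq_int i Y Y' hYm hY'm),
        integral_sub (by exact ((hsq_int i X Y hXm hYm).add (hsq_int i X' Y' hX'm hY'm)))
          (hsq_int i X X' hXm hX'm),
        integral_add (hsq_int i X Y hXm hYm) (hsq_int i X' Y' hX'm hY'm)]
    rw [e1, e2, e3, e4]
    ring
  have hae : ∀ᵐ ω ∂μ, |X ω - Y ω| + |X' ω - Y' ω| - |X ω - X' ω| - |Y ω - Y' ω|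
      = ∑ i ∈ range n, D i ω := by
    filter_upwards [ae_cast_mem μ hXm hX, ae_cast_mem μ hX'm hX',
      ae_cast_mem μ hYm hY, ae_cast_mem μ hY'm hY'] with ω hX1 hX2 hY1 hY2
    obtain ⟨jX, hjX, hXv⟩ := hX1
    obtain ⟨jX', hjX', hX'v⟩ := hX2
    obtain ⟨jY, hjY, hYv⟩ := hY1
    obtain ⟨jY', hjY', hY'v⟩ := hY2
    simp only [hD_def]
    rw [hXv, hX'v, hYv, hY'v]
    rw [abs_sub_eq_sum_indf n jX jY hjX hjY, abs_sub_eq_sum_indf n jX' jY' hjX' hjY',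
      abs_sub_eq_sum_indf n jX jX' hjX hjX', abs_sub_eq_sum_indf n jY jY' hjY hjY']
    rw [← Finset.sum_add_distrib, ← Finset.sum_sub_distrib, ← Finset.sum_sub_distrib]
  have hcalc : ∫ ω, (|X ω - Y ω| + |X' ω - Y' ω| - |X ω - X' ω| - |Y ω - Y' ω|) ∂μ
      = ∑ i ∈ range n, 2 * (Fp i - Fq i)^2 := by
    rw [integral_congr_ae hae, integral_finset_sum _ hD_int]
    exact Finset.sum_congr rfl hD_val
  have hFp_eq : ∀ i ∈ range n, Fp i = ∑ j ∈ range (i+1), bco n j p :=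
    fun i hi => cdf_partial n p i (Finset.mem_range.1 hi)
  have hFq_eq : ∀ i ∈ range n, Fq i = ∑ j ∈ range (i+1), bco n j q :=
    fun i hi => cdf_partial n q i (Finset.mem_range.1 hi)
  have hfinal : ∑ i ∈ range n, 2*(Fp i - Fq i)^2
      = 2 * ∑ i ∈ range n, ((∑ j ∈ range (i+1), bco n j p) - (∑ j ∈ range (i+1), bco n j q))^2 := by
    rw [Finset.mul_sum]
    exact Finset.sum_congr rfl fun i hi => by rw [hFp_eq i hi, hFq_eq i hi]
  rw [ge_iff_le, hcalc, hfinal]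
  rcases le_total q p with hqp | hqp
  · exact key_ineq n p q ⟨hp0, hp1⟩ ⟨hq0, hq1⟩ hqp (by omega) hsum hdiff
  · have H := key_ineq n q p ⟨hq0, hq1⟩ ⟨hp0, hp1⟩ hqp (by omega) (by rwa [add_comm])
      (by rwa [abs_sub_comm, add_comm])
    calc (n:ℝ)^2*(p-q)^2/(40*Real.sqrt ((n:ℝ)*(p+q)))
        = (n:ℝ)^2*(q-p)^2/(40*Real.sqrt ((n:ℝ)*(q+p))) := by
          rw [show (p-q)^2 = (q-p)^2 by ring, add_comm]
      _ ≤ 2*∑ i ∈ range n, ((∑ j ∈ range (i+1), bco n j q) - (∑ j ∈ range (i+1), bco n j p))^2 := H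
      _ = 2*∑ i ∈ range n, ((∑ j ∈ range (i+1), bco n j p) - (∑ j ∈ range (i+1), bco n j q))^2 :=
          congrArg _ (Finset.sum_congr rfl fun i _ => by ring)
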